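/- For two logically independent events p and q, a forecast (a, b, c) for (p, q, p∨q) is probabilistically coherent if and only if max(a, b) ≤ c ≤ min(1, a + b). -/

import Mathlib

def Coherent {n m : ℕ} (E : Fin m → (Fin n → Bool) → Bool) (p : Fin m → ℝ) : Prop :=
  ∃ μ : (Fin n → Bool) → ℝ, (∀ ω, 0 ≤ μ ω) ∧ (∑ ω, μ ω = 1) ∧
    ∀ i, p i = ∑ ω, if E i ω then μ ω else 0

lemma sum_ind {n : ℕ} (E : (Fin n → Bool) → Bool) (w : Fin n → Bool) (m : ℝ) :
    ∑ ω, (if E ω then (if ω = w then m else 0) else 0) = if E w then m else 0 := by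
  have h : ∀ ω : Fin n → Bool,
      (if E ω then (if ω = w then m else 0) else 0)
        = if ω = w then (if E ω then m else 0) else 0 := by
    intro ω; by_cases h : E ω <;> by_cases h2 : ω = w <;> simp [h, h2]
  rw [Finset.sum_congr rfl (fun ω _ => h ω)]
  simp [Finset.sum_ite_eq' Finset.univ w (fun ω => if E ω then m else 0)]

lemma sum_mu {n : ℕ} (E : (Fin n → Bool) → Bool) (w1 w2 w3 w4 : Fin n → Bool)
    (m1 m2 m3 m4 : ℝ) :
    ∑ ω, (if E ω then (if ω = w1 then m1 else 0) + (if ω = w2 then m2 else 0)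
        + (if ω = w3 then m3 else 0) + (if ω = w4 then m4 else 0) else 0)
      = (if E w1 then m1 else 0) + (if E w2 then m2 else 0)
        + (if E w3 then m3 else 0) + (if E w4 then m4 else 0) := by
  have h : ∀ ω : Fin n → Bool,
      (if E ω then (if ω = w1 then m1 else 0) + (if ω = w2 then m2 else 0)
        + (if ω = w3 then m3 else 0) + (if ω = w4 then m4 else 0) else 0)
      = (if E ω then (if ω = w1 then m1 else 0) else 0)
        + (if E ω then (if ω = w2 then m2 else 0) else 0)
        + (if E ω then (if ω = w3 then m3 else 0) else 0)
        + (if E ω then (if ω = w4 then m4 else 0) else 0) := by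
    intro ω; by_cases h : E ω <;> simp [h]
  rw [Finset.sum_congr rfl (fun ω _ => h ω), Finset.sum_add_distrib,
    Finset.sum_add_distrib, Finset.sum_add_distrib, sum_ind, sum_ind, sum_ind, sum_ind]

/-- Coherence characterization for (p, q, p ∨ q) with logically independent p, q. -/
theorem disjunction_coherence_iff {n : ℕ} (P Q : (Fin n → Bool) → Bool)
    (hindep : ∀ u v : Bool, ∃ ω, P ω = u ∧ Q ω = v)
    (a b c : ℝ) (ha : a ∈ Set.Icc (0 : ℝ) 1) (hb : b ∈ Set.Icc (0 : ℝ) 1)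
    (hc : c ∈ Set.Icc (0 : ℝ) 1) :
    Coherent ![P, Q, fun ω => P ω || Q ω] ![a, b, c] ↔
      max a b ≤ c ∧ c ≤ min 1 (a + b) := by
  constructor
  · rintro ⟨μ, h0, h1, h2⟩
    have hA := h2 0
    have hB := h2 1
    have hC := h2 2
    simp only [Matrix.cons_val_zero, Matrix.cons_val_one, Matrix.head_cons,
      Matrix.cons_val_two, Matrix.tail_cons] at hA hB hC
    have hac : a ≤ c := by
      rw [hA, hC]
      apply Finset.sum_le_sum
      intro ω _
      by_cases hP : P ω = true <;> by_cases hQ : Q ω = true <;> simp [hP, hQ, h0 ω]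
    have hbc : b ≤ c := by
      rw [hB, hC]
      apply Finset.sum_le_sum
      intro ω _
      by_cases hP : P ω = true <;> by_cases hQ : Q ω = true <;> simp [hP, hQ, h0 ω]
    have hcab : c ≤ a + b := by
      rw [hA, hB, hC, ← Finset.sum_add_distrib]
      apply Finset.sum_le_sum
      intro ω _
      by_cases hP : P ω = true <;> by_cases hQ : Q ω = true <;> simp [hP, hQ, h0 ω]
    exact ⟨max_le hac hbc, le_min hc.2 hcab⟩
  · rintro ⟨hmax, hmin⟩
    have hac : a ≤ c := le_trans (le_max_left a b) hmax
    have hbc : b ≤ c := le_trans (le_max_right a b) hmax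
    have hcab : c ≤ a + b := le_trans hmin (min_le_right _ _)
    have hc1 : c ≤ 1 := hc.2
    obtain ⟨w11, hw11P, hw11Q⟩ := hindep true true
    obtain ⟨w10, hw10P, hw10Q⟩ := hindep true false
    obtain ⟨w01, hw01P, hw01Q⟩ := hindep false true
    obtain ⟨w00, hw00P, hw00Q⟩ := hindep false false
    refine ⟨fun ω => (if ω = w11 then a + b - c else 0) + (if ω = w10 then c - b else 0)
      + (if ω = w01 then c - a else 0) + (if ω = w00 then 1 - c else 0), ?_, ?_, ?_⟩
    · intro ω
      dsimp only
      split_ifs <;> linarith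
    · rw [Finset.sum_add_distrib, Finset.sum_add_distrib, Finset.sum_add_distrib]
      simp [Finset.sum_ite_eq' Finset.univ]
    · intro i
      fin_cases i <;>
        simp only [Fin.zero_eta, Fin.mk_one, Fin.reduceFinMk, Matrix.cons_val_zero,
          Matrix.cons_val_one, Matrix.head_cons, Matrix.cons_val_two, Matrix.tail_cons,
          Fin.isValue]
      · erw [sum_mu P, hw11P, hw10P, hw01P, hw00P]
        simp
      · erw [sum_mu Q, hw11Q, hw10Q, hw01Q, hw00Q]
        simp
      · rw [sum_mu, hw11P, hw10P, hw01P, hw00P, hw11Q, hw10Q, hw01Q, hw00Q]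
        simp
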